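/- arXiv:2003.00625 — 2 statements merged into one kernel-verified Lean document; each statement's English description precedes it below -/
import Mathlib

section
/- Let H be a graph with a nonempty finite set U ⊆ V(H) of positive integers, let p = (p_1, p_2) be an ordered partition of |U| and p' = (p_2, p_1). Then the sum of T_G(1, y) over all connected graphs G = H ∪ Q, where Q ranges over complete tiered graphs on U with tier sizes p, equals the sum of T_G(1, y) over all connected graphs G = H ∪ Q' where Q' ranges over complete tiered graphs on U with tier sizes p'. Here T_G(x, y) denotes the Tutte polynomial. -/
open Finset

attribute [local instance 10] Classical.propDecidable

noncomputable section

/-- An edge of a simple graph on `ℕ`, stored as an ordered pair `(u,v)` with `u < v` intended. -/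
abbrev PEdge : Type := ℕ × ℕ

/-- A labelled edge (for multigraphs): an endpoint pair together with a label. -/
abbrev LEdge : Type := (ℕ × ℕ) × ℕ

def adjP (E : Finset PEdge) (u v : ℕ) : Prop := (u, v) ∈ E ∨ (v, u) ∈ E

def reachP (E : Finset PEdge) : ℕ → ℕ → Prop := Relation.ReflTransGen (adjP E)

def connP (V : Finset ℕ) (E : Finset PEdge) : Prop :=
  (∀ e ∈ E, e.1 ∈ V ∧ e.2 ∈ V) ∧ ∀ u ∈ V, ∀ v ∈ V, reachP E u v

def IsTreeOn (V : Finset ℕ) (E : Finset PEdge) : Prop := connP V E ∧ E.card + 1 = V.card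

/-- A graph on a finite set of naturals together with a tiering map. -/
structure PreGraph where
  V : Finset ℕ
  E : Finset PEdge
  t : ℕ → ℕ

/-- `G` is a tiered graph with two tiers. -/
def IsTiered (G : PreGraph) : Prop :=
  (∀ v ∈ G.V, 0 < v) ∧
  (∀ e ∈ G.E, e.1 ∈ G.V ∧ e.2 ∈ G.V ∧ e.1 < e.2) ∧
  (∀ v ∈ G.V, G.t v = 1 ∨ G.t v = 2) ∧
  (∀ e ∈ G.E, G.t e.1 < G.t e.2)

/-- acyclicity: every edge is a bridge. -/
def IsForest (G : PreGraph) : Prop := ∀ e ∈ G.E, ¬ reachP (G.E.erase e) e.1 e.2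

def IsTreeG (G : PreGraph) : Prop := IsTreeOn G.V G.E

/-- the connected component (vertex set) of `x`. -/
def comp (V : Finset ℕ) (E : Finset PEdge) (x : ℕ) : Finset ℕ :=
  V.filter fun y => reachP E x y

/-- the order-reversing involution `x_i ↦ x_{s+1-i}` of a finite set `V = {x_1 < ... < x_s}`. -/
def flipMap (V : Finset ℕ) (x : ℕ) : ℕ :=
  if hx : x ∈ V then
    ((V.orderIsoOfFin rfl)
      ⟨V.card - 1 - ((V.orderIsoOfFin rfl).symm ⟨x, hx⟩).1, by
        have h := ((V.orderIsoOfFin rfl).symm ⟨x, hx⟩).isLt; omega⟩).1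
  else x

/-- the dual of a (connected) tiered graph, via the global vertex ordering. -/
def dual (G : PreGraph) : PreGraph where
  V := G.V
  E := G.E.image fun e => (flipMap G.V e.2, flipMap G.V e.1)
  t := fun x => if x ∈ G.V then 3 - G.t (flipMap G.V x) else G.t x

/-- the componentwise dual of a (possibly disconnected) tiered graph. -/
def cdual (G : PreGraph) : PreGraph where
  V := G.V
  E := G.E.image fun e => (flipMap (comp G.V G.E e.1) e.2, flipMap (comp G.V G.E e.1) e.1)
  t := fun x => if x ∈ G.V then 3 - G.t (flipMap (comp G.V G.E x) x) else G.t x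

/-- the recursive weight of a tiered tree (fuel-based implementation; the recursion
depth is bounded by the number of vertices). -/
def weightAux : ℕ → PreGraph → ℕ
  | 0, _ => 0
  | fuel + 1, T =>
    if h : 2 ≤ T.V.card then
      let v := T.V.min' (Finset.card_pos.mp (by omega))
      let V' := T.V.erase v
      let E' := T.E.filter fun e => e.1 ≠ v ∧ e.2 ≠ v
      ∑ u ∈ V'.filter (fun u => adjP T.E v u),
        (((comp V' E' u).filter fun y => y < u ∧ T.t v < T.t y).card
          + weightAux fuel ⟨comp V' E' u, E'.filter fun e => e.1 ∈ comp V' E' u, T.t⟩)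
    else 0

def weight (T : PreGraph) : ℕ := weightAux T.V.card T

/-- edges of a complete tiered graph with tier 1 vertex set `A` and tier 2 vertex set `B`. -/
def ctE2 (A B : Finset ℕ) : Finset PEdge := (A ×ˢ B).filter fun e => e.1 < e.2

/-- the edge set of the complete tiered graph determined by a two-tier tiered graph `G`. -/
def ctE (G : PreGraph) : Finset PEdge :=
  ctE2 (G.V.filter fun v => G.t v = 1) (G.V.filter fun v => G.t v = 2)

/-- edge set of the complete tiered graph on `[n]` determined by a tiering map `t`. -/
def ctEM (n : ℕ) (t : ℕ → ℕ) : Finset PEdge :=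
  (Finset.Icc 1 n ×ˢ Finset.Icc 1 n).filter fun e => e.1 < e.2 ∧ t e.1 < t e.2

def extActiveP (T : Finset PEdge) (ω : PEdge → ℝ) (e : PEdge) : Prop :=
  e ∉ T ∧ reachP T e.1 e.2 ∧ ∀ e' ∈ T, ¬ reachP (T.erase e') e.1 e.2 → ω e < ω e'

/-- external activity of the spanning forest `T` in the graph with edge set `E`. -/
def eaP (E T : Finset PEdge) (ω : PEdge → ℝ) : ℕ := (E.filter (extActiveP T ω)).card

def adjL (E : Finset LEdge) (u v : ℕ) : Prop := ∃ e ∈ E, e.1 = (u, v) ∨ e.1 = (v, u)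
def reachL (E : Finset LEdge) : ℕ → ℕ → Prop := Relation.ReflTransGen (adjL E)
def connL (V : Finset ℕ) (E : Finset LEdge) : Prop := ∀ u ∈ V, ∀ v ∈ V, reachL E u v
def IsLTree (V : Finset ℕ) (T : Finset LEdge) : Prop := connL V T ∧ T.card + 1 = V.card

def extActiveL (T : Finset LEdge) (ω : LEdge → ℝ) (e : LEdge) : Prop :=
  e ∉ T ∧ reachL T e.1.1 e.1.2 ∧ ∀ e' ∈ T, ¬ reachL (T.erase e') e.1.1 e.1.2 → ω e < ω e'

def eaL (E T : Finset LEdge) (ω : LEdge → ℝ) : ℕ := (E.filter (extActiveL T ω)).card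

def omega1 (N : ℕ) (e : PEdge) : ℝ := (e.1 : ℝ) + (e.2 : ℝ) / (N : ℝ)
def omega2 (N : ℕ) (e : PEdge) : ℝ := ((N + 1 - e.2 : ℕ) : ℝ) + ((N + 1 - e.1 : ℕ) : ℝ) / (N : ℝ)
def omegaLex (n : ℕ) (e : PEdge) : ℝ := ((e.1 * (n + 1) + e.2 : ℕ) : ℝ)

/-- representative (minimum) of the component of `x` in the forest `F` on vertex set `V`. -/
def rep (V : Finset ℕ) (F : Finset LEdge) (x : ℕ) : ℕ :=
  if hx : x ∈ V then
    (V.filter fun y => reachL F x y).min'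
      ⟨x, Finset.mem_filter.mpr ⟨hx, Relation.ReflTransGen.refl⟩⟩
  else x

/-- image of an edge in the quotient graph `G • F`; the label encodes the original edge. -/
def quotEdge (ρ : ℕ → ℕ) (e : LEdge) : LEdge :=
  ((ρ e.1.1, ρ e.1.2), Nat.pair (Nat.pair e.1.1 e.1.2) e.2)

/-- recover the original edge from a quotient edge. -/
def decodeE (e : LEdge) : LEdge :=
  (((Nat.unpair (Nat.unpair e.2).1).1, (Nat.unpair (Nat.unpair e.2).1).2), (Nat.unpair e.2).2)

/-- tiering map on `[n]` induced by `f : Fin n → Fin m` (tiers `1,...,m`). -/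
def tf (n m : ℕ) (f : Fin n → Fin m) : ℕ → ℕ := fun v =>
  if h : v ∈ Finset.Icc 1 n then
    (f ⟨v - 1, by have := Finset.mem_Icc.mp h; omega⟩).1 + 1
  else 0

/-- `G` is a tiered graph with `m` tiers. -/
def IsTieredM (m : ℕ) (G : PreGraph) : Prop :=
  (∀ e ∈ G.E, e.1 ∈ G.V ∧ e.2 ∈ G.V ∧ e.1 < e.2) ∧
  (∀ v ∈ G.V, G.t v ∈ Finset.Icc 1 m) ∧
  (∀ e ∈ G.E, G.t e.1 < G.t e.2) ∧
  (∀ i ∈ Finset.Icc 1 m, ∃ v ∈ G.V, G.t v = i)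

/-- weight polynomial `P_p(q)` (recursive weight), evaluated at `q`. -/
def Pw (n m : ℕ) (p : ℕ → ℕ) (q : ℤ) : ℤ :=
  ∑ f : Fin n → Fin m,
    ∑ E ∈ ((Finset.Icc 1 n ×ˢ Finset.Icc 1 n).powerset.filter fun E =>
        IsTreeG ⟨Finset.Icc 1 n, E, tf n m f⟩ ∧ IsTieredM m ⟨Finset.Icc 1 n, E, tf n m f⟩ ∧
        ∀ i ∈ Finset.Icc 1 m, ((Finset.Icc 1 n).filter fun v => tf n m f v = i).card = p i),
      q ^ weight ⟨Finset.Icc 1 n, E, tf n m f⟩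

/-- weight polynomial `P_p(q)` with the weight of a tiered tree given by its external
activity in the complete tiered graph it determines (lexicographic edge order). -/
def PwEA (n m : ℕ) (p : ℕ → ℕ) (q : ℤ) : ℤ :=
  ∑ f : Fin n → Fin m,
    ∑ E ∈ ((Finset.Icc 1 n ×ˢ Finset.Icc 1 n).powerset.filter fun E =>
        IsTreeG ⟨Finset.Icc 1 n, E, tf n m f⟩ ∧ IsTieredM m ⟨Finset.Icc 1 n, E, tf n m f⟩ ∧
        ∀ i ∈ Finset.Icc 1 m, ((Finset.Icc 1 n).filter fun v => tf n m f v = i).card = p i),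
      q ^ eaP (ctEM n (tf n m f)) E (omegaLex n)

/-- `T^c_G(y)`: the Tutte evaluation `T_G(1,y)` (spanning tree expansion) for a connected
graph, `0` otherwise. -/
def TcP (V : Finset ℕ) (E : Finset PEdge) (ω : PEdge → ℝ) (y : ℤ) : ℤ :=
  if connP V E then ∑ T ∈ E.powerset.filter (fun T => IsTreeOn V T), y ^ eaP E T ω else 0

/-- edge multiset of `H ∪ Q_S`: `H`-edges (labels `≠ 0`) together with the complete
tiered graph on `U` with tier-1 set `S` (labelled `0`). -/
def qE (U : Finset ℕ) (EH : Finset LEdge) (S : Finset ℕ) : Finset LEdge :=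
  EH ∪ (ctE2 S (U \ S)).image fun p => (p, 0)

/-- `(S,T) ↦ (S*, T*)`: the dual quasi-tiered tree. -/
def dualTree (U : Finset ℕ) (ST : Finset ℕ × Finset LEdge) : Finset ℕ × Finset LEdge :=
  (U.filter fun v =>
      (cdual ⟨U, (ST.2.filter fun e => e.2 = 0).image Prod.fst,
        fun w => if w ∈ ST.1 then 1 else 2⟩).t v = 1,
   (ST.2.filter fun e => e.2 ≠ 0) ∪
     (cdual ⟨U, (ST.2.filter fun e => e.2 = 0).image Prod.fst,
        fun w => if w ∈ ST.1 then 1 else 2⟩).E.image fun p => (p, 0))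

/-- tiered forests on `U` with tier sizes `(p1, p2)` (tier map normalised off `U`). -/
def ForestSet (U : Finset ℕ) (p1 p2 : ℕ) : Set PreGraph :=
  {F | F.V = U ∧ IsTiered F ∧ IsForest F ∧
    (U.filter fun v => F.t v = 1).card = p1 ∧
    (U.filter fun v => F.t v = 2).card = p2 ∧
    ∀ v, v ∉ U → F.t v = 0}


section Aux


lemma adjL_symm {E : Finset LEdge} {u v : ℕ} (h : adjL E u v) : adjL E v u := by
  obtain ⟨e, he, h⟩ := h; exact ⟨e, he, h.symm⟩

lemma reachL_refl {E : Finset LEdge} (x : ℕ) : reachL E x x := Relation.ReflTransGen.refl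

lemma reachL_symm {E : Finset LEdge} {x y : ℕ} (h : reachL E x y) : reachL E y x :=
  by haveI : Std.Symm (adjL E) := ⟨fun _ _ => adjL_symm⟩; exact Std.Symm.symm (r := Relation.ReflTransGen (adjL E)) _ _ h

lemma reachL_trans {E : Finset LEdge} {x y z : ℕ} (h : reachL E x y) (h' : reachL E y z) :
    reachL E x z := Relation.ReflTransGen.trans h h'

lemma adjL_mono {E E' : Finset LEdge} (hE : E ⊆ E') {u v : ℕ} (h : adjL E u v) : adjL E' u v := by
  obtain ⟨e, he, h⟩ := h; exact ⟨e, hE he, h⟩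

lemma reachL_mono {E E' : Finset LEdge} (hE : E ⊆ E') {x y : ℕ} (h : reachL E x y) :
    reachL E' x y := Relation.ReflTransGen.mono (fun _ _ => adjL_mono hE) _ _ h

lemma reachL_adj {E : Finset LEdge} {e : LEdge} (he : e ∈ E) : reachL E e.1.1 e.1.2 :=
  Relation.ReflTransGen.single ⟨e, he, Or.inl rfl⟩

lemma reachL_of_adjL {E : Finset LEdge} {u v : ℕ} (h : adjL E u v) : reachL E u v :=
  Relation.ReflTransGen.single h

/-- truncation: a walk either avoids `e` or first reaches an endpoint of `e`. -/
lemma reach_truncate {E : Finset LEdge} {e : LEdge} {x y : ℕ} (h : reachL E x y) :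
    reachL (E.erase e) x y ∨ reachL (E.erase e) x e.1.1 ∨ reachL (E.erase e) x e.1.2 := by
  induction h with
  | refl => exact Or.inl (reachL_refl x)
  | tail _ hbc IH =>
    rename_i b c _
    obtain ⟨f, hf, hor⟩ := hbc
    by_cases hfe : f = e
    · subst hfe
      rcases IH with IH | IH | IH
      · rcases hor with h1 | h1
        · exact Or.inr (Or.inl (by rw [show b = f.1.1 from (congrArg Prod.fst h1).symm] at IH; exact IH))
        · exact Or.inr (Or.inr (by rw [show b = f.1.2 from (congrArg Prod.snd h1).symm] at IH; exact IH))
      · exact Or.inr (Or.inl IH)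
      · exact Or.inr (Or.inr IH)
    · have hstep : adjL (E.erase e) b c := ⟨f, Finset.mem_erase.2 ⟨hfe, hf⟩, hor⟩
      rcases IH with IH | IH | IH
      · exact Or.inl (IH.tail hstep)
      · exact Or.inr (Or.inl IH)
      · exact Or.inr (Or.inr IH)

/-- substitute a detour for an edge. -/
lemma reach_subst {E D : Finset LEdge} {g : LEdge} (hsub : E.erase g ⊆ D)
    (hg : reachL D g.1.1 g.1.2) {x y : ℕ} (h : reachL E x y) : reachL D x y := by
  induction h with
  | refl => exact reachL_refl x
  | tail _ hbc IH =>
    rename_i b c _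
    obtain ⟨f, hf, hor⟩ := hbc
    by_cases hfg : f = g
    · subst hfg
      rcases hor with h1 | h1
      · have hb : f.1.1 = b := congrArg Prod.fst h1
        have hc : f.1.2 = c := congrArg Prod.snd h1
        exact IH.trans (hb ▸ hc ▸ hg)
      · have hb : f.1.2 = b := congrArg Prod.snd h1
        have hc : f.1.1 = c := congrArg Prod.fst h1
        exact IH.trans (hb ▸ hc ▸ reachL_symm hg)
    · exact IH.tail ⟨f, hsub (Finset.mem_erase.2 ⟨hfg, hf⟩), hor⟩

/-- a predicate respected by all edges is preserved along walks. -/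
lemma reach_pres {E : Finset LEdge} (P : ℕ → Prop) (hE : ∀ g ∈ E, (P g.1.1 ↔ P g.1.2))
    {x y : ℕ} (h : reachL E x y) : P x ↔ P y := by
  induction h with
  | refl => rfl
  | tail _ hbc IH =>
    obtain ⟨f, hf, hor⟩ := hbc
    rcases hor with h1 | h1
    · have := hE f hf
      rw [show f.1.1 = _ from congrArg Prod.fst h1, show f.1.2 = _ from congrArg Prod.snd h1] at this
      exact IH.trans this
    · have := hE f hf
      rw [show f.1.1 = _ from congrArg Prod.fst h1, show f.1.2 = _ from congrArg Prod.snd h1] at this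
      exact IH.trans this.symm

/-- eliminating a distinguished edge from a walk. -/
lemma reach_insert_elim {W' : Finset LEdge} {g : LEdge} {x y : ℕ}
    (h : reachL (insert g W') x y) :
    reachL W' x y ∨ (reachL W' x g.1.1 ∧ reachL W' y g.1.2) ∨
      (reachL W' x g.1.2 ∧ reachL W' y g.1.1) := by
  induction h with
  | refl => exact Or.inl (reachL_refl x)
  | tail _ hbc IH =>
    rename_i b c _
    obtain ⟨f, hf, hor⟩ := hbc
    rcases Finset.mem_insert.1 hf with hfg | hfW
    · subst hfg
      have hbc' : (f.1.1 = b ∧ f.1.2 = c) ∨ (f.1.2 = b ∧ f.1.1 = c) := by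
        rcases hor with h1 | h1
        · exact Or.inl ⟨congrArg Prod.fst h1, congrArg Prod.snd h1⟩
        · exact Or.inr ⟨congrArg Prod.snd h1, congrArg Prod.fst h1⟩
      rcases hbc' with ⟨hb, hc⟩ | ⟨hb, hc⟩
      · subst hb; subst hc
        rcases IH with IH | ⟨IH1, IH2⟩ | ⟨IH1, IH2⟩
        · exact Or.inr (Or.inl ⟨IH, reachL_refl _⟩)
        · exact Or.inl (IH1.trans IH2)
        · exact Or.inl IH1
      · subst hb; subst hc
        rcases IH with IH | ⟨IH1, IH2⟩ | ⟨IH1, IH2⟩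
        · exact Or.inr (Or.inr ⟨IH, reachL_refl _⟩)
        · exact Or.inl IH1
        · exact Or.inl (IH1.trans IH2)
    · have hstep : adjL W' b c := ⟨f, hfW, hor⟩
      rcases IH with IH | ⟨IH1, IH2⟩ | ⟨IH1, IH2⟩
      · exact Or.inl (IH.tail hstep)
      · exact Or.inr (Or.inl ⟨IH1, (reachL_of_adjL (adjL_symm hstep)).trans IH2⟩)
      · exact Or.inr (Or.inr ⟨IH1, (reachL_of_adjL (adjL_symm hstep)).trans IH2⟩)



/-- the reachability class of `c` is connected using only its own edges. -/
lemma reach_filter_class {E : Finset LEdge} {c z : ℕ} (h : reachL E c z) :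
    reachL (E.filter (fun h => reachL E c h.1.1)) c z := by
  induction h with
  | refl => exact reachL_refl c
  | @tail y w hcy hyw IH =>
    obtain ⟨f, hf, hor⟩ := hyw
    have hcf1 : reachL E c f.1.1 := by
      rcases hor with h1 | h1
      · exact (congrArg Prod.fst h1) ▸ hcy
      · exact Relation.ReflTransGen.tail hcy ⟨f, hf, Or.inr (by rw [h1])⟩
    exact IH.tail ⟨f, Finset.mem_filter.2 ⟨hf, hcf1⟩, hor⟩

lemma class_end {E' : Finset LEdge} {V : Finset ℕ}
    (hend : ∀ h ∈ E', h.1.1 ∈ V ∧ h.1.2 ∈ V) (c : ℕ) :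
    ∀ h ∈ E'.filter (fun h => reachL E' c h.1.1),
      h.1.1 ∈ V.filter (fun x => reachL E' c x) ∧ h.1.2 ∈ V.filter (fun x => reachL E' c x) := by
  intro h hh
  obtain ⟨hh', hr⟩ := Finset.mem_filter.1 hh
  refine ⟨Finset.mem_filter.2 ⟨(hend h hh').1, hr⟩,
    Finset.mem_filter.2 ⟨(hend h hh').2, hr.tail ⟨h, hh', Or.inl rfl⟩⟩⟩

lemma class_conn {E' : Finset LEdge} {V : Finset ℕ} (c : ℕ) :
    connL (V.filter (fun x => reachL E' c x)) (E'.filter (fun h => reachL E' c h.1.1)) := by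
  intro u hu v hv
  obtain ⟨-, hru⟩ := Finset.mem_filter.1 hu
  obtain ⟨-, hrv⟩ := Finset.mem_filter.1 hv
  exact (reachL_symm (reach_filter_class hru)).trans (reach_filter_class hrv)

/-- a connected graph on `V` has at least `|V| - 1` edges. -/
lemma conn_card_le (E : Finset LEdge) : ∀ (V : Finset ℕ),
    (∀ e ∈ E, e.1.1 ∈ V ∧ e.1.2 ∈ V) → connL V E → V.card ≤ E.card + 1 := by
  induction E using Finset.strongInductionOn with
  | _ E IH =>
    intro V hend hconn
    by_cases hV1 : V.card ≤ 1
    · omega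
    · obtain ⟨u, hu, v, hv, huv⟩ := Finset.one_lt_card.1 (show 1 < V.card by omega)
      obtain hcase | ⟨c, ⟨e, he, -⟩, -⟩ := (hconn u hu v hv).cases_head
      · exact absurd hcase huv
      set E' := E.erase e with hE'
      have hsub : E' ⊂ E := Finset.erase_ssubset he
      by_cases hee : reachL E' e.1.1 e.1.2
      · have hconn' : connL V E' := fun a ha b hb =>
          reach_subst (Finset.Subset.refl _) hee (hconn a ha b hb)
        have hih := IH E' hsub V (fun f hf => hend f (Finset.mem_of_mem_erase hf)) hconn'
        have hcc : E'.card ≤ E.card := Finset.card_le_card hsub.subset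
        omega
      · have he1V : e.1.1 ∈ V := (hend e he).1
        have he2V : e.1.2 ∈ V := (hend e he).2
        have hcover : ∀ x ∈ V, reachL E' e.1.1 x ∨ reachL E' e.1.2 x := by
          intro x hx
          rcases reach_truncate (hconn x hx e.1.1 he1V) with h1 | h1 | h1
          · exact Or.inl (reachL_symm h1)
          · exact Or.inl (reachL_symm h1)
          · exact Or.inr (reachL_symm h1)
        set V1 := V.filter (fun x => reachL E' e.1.1 x) with hV1d
        set V2 := V.filter (fun x => reachL E' e.1.2 x) with hV2d
        set E1 := E'.filter (fun h => reachL E' e.1.1 h.1.1) with hE1d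
        set E2 := E'.filter (fun h => reachL E' e.1.2 h.1.1) with hE2d
        have hVsub : V ⊆ V1 ∪ V2 := by
          intro x hx
          rcases hcover x hx with h | h
          · exact Finset.mem_union_left _ (Finset.mem_filter.2 ⟨hx, h⟩)
          · exact Finset.mem_union_right _ (Finset.mem_filter.2 ⟨hx, h⟩)
        have hEdisj : Disjoint E1 E2 := by
          rw [Finset.disjoint_left]
          intro f hf1 hf2
          exact hee (((Finset.mem_filter.1 hf1).2).trans (reachL_symm (Finset.mem_filter.1 hf2).2))
        have hendE' : ∀ h ∈ E', h.1.1 ∈ V ∧ h.1.2 ∈ V :=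
          fun f hf => hend f (Finset.mem_of_mem_erase hf)
        have h1 := IH E1 (lt_of_le_of_lt (Finset.filter_subset _ _) hsub) V1
          (class_end hendE' e.1.1) (class_conn e.1.1)
        have h2 := IH E2 (lt_of_le_of_lt (Finset.filter_subset _ _) hsub) V2
          (class_end hendE' e.1.2) (class_conn e.1.2)
        have hVc : V.card ≤ V1.card + V2.card :=
          le_trans (Finset.card_le_card hVsub) (Finset.card_union_le _ _)
        have hEc : E1.card + E2.card ≤ E'.card := by
          rw [← Finset.card_union_of_disjoint hEdisj]
          exact Finset.card_le_card (Finset.union_subset (Finset.filter_subset _ _)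
            (Finset.filter_subset _ _))
        have hE'c : E'.card = E.card - 1 := Finset.card_erase_of_mem he
        have hEpos : 1 ≤ E.card := Finset.card_pos.2 ⟨e, he⟩
        omega

lemma connL_mono {V : Finset ℕ} {E E' : Finset LEdge} (h : E ⊆ E') (hc : connL V E) :
    connL V E' := fun u hu v hv => reachL_mono h (hc u hu v hv)

/-- a minimally connected graph on `V` has at most `|V| - 1` edges. -/
lemma min_conn_card (E : Finset LEdge) : ∀ (V : Finset ℕ), V.Nonempty →
    (∀ e ∈ E, e.1.1 ∈ V ∧ e.1.2 ∈ V) → connL V E →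
    (∀ e ∈ E, ¬ connL V (E.erase e)) → E.card + 1 ≤ V.card := by
  induction E using Finset.strongInductionOn with
  | _ E IH =>
    intro V hV hend hconn hmin
    rcases Finset.eq_empty_or_nonempty E with hE | ⟨e, he⟩
    · have := Finset.card_pos.2 hV
      simp only [hE, Finset.card_empty]
      omega
    set E' := E.erase e with hE'
    have hsub : E' ⊂ E := Finset.erase_ssubset he
    have hee : ¬ reachL E' e.1.1 e.1.2 := by
      intro hee
      exact hmin e he (fun a ha b hb => reach_subst (Finset.Subset.refl _) hee (hconn a ha b hb))
    have he1V : e.1.1 ∈ V := (hend e he).1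
    have he2V : e.1.2 ∈ V := (hend e he).2
    have hcover : ∀ x ∈ V, reachL E' e.1.1 x ∨ reachL E' e.1.2 x := by
      intro x hx
      rcases reach_truncate (hconn x hx e.1.1 he1V) with h1 | h1 | h1
      · exact Or.inl (reachL_symm h1)
      · exact Or.inl (reachL_symm h1)
      · exact Or.inr (reachL_symm h1)
    set V1 := V.filter (fun x => reachL E' e.1.1 x) with hV1d
    set V2 := V.filter (fun x => reachL E' e.1.2 x) with hV2d
    set E1 := E'.filter (fun h => reachL E' e.1.1 h.1.1) with hE1d
    set E2 := E'.filter (fun h => reachL E' e.1.2 h.1.1) with hE2d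
    have hendE' : ∀ h ∈ E', h.1.1 ∈ V ∧ h.1.2 ∈ V :=
      fun f hf => hend f (Finset.mem_of_mem_erase hf)
    have hVdisj : Disjoint V1 V2 := by
      rw [Finset.disjoint_left]
      intro x hx1 hx2
      exact hee (((Finset.mem_filter.1 hx1).2).trans (reachL_symm (Finset.mem_filter.1 hx2).2))
    have hEdisj : Disjoint E1 E2 := by
      rw [Finset.disjoint_left]
      intro f hf1 hf2
      exact hee (((Finset.mem_filter.1 hf1).2).trans (reachL_symm (Finset.mem_filter.1 hf2).2))
    have hEcover : E' = E1 ∪ E2 := by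
      apply Finset.Subset.antisymm
      · intro f hf
        rcases hcover f.1.1 (hendE' f hf).1 with h | h
        · exact Finset.mem_union_left _ (Finset.mem_filter.2 ⟨hf, h⟩)
        · exact Finset.mem_union_right _ (Finset.mem_filter.2 ⟨hf, h⟩)
      · exact Finset.union_subset (Finset.filter_subset _ _) (Finset.filter_subset _ _)
    have he1V1 : e.1.1 ∈ V1 := Finset.mem_filter.2 ⟨he1V, reachL_refl _⟩
    have he2V2 : e.1.2 ∈ V2 := Finset.mem_filter.2 ⟨he2V, reachL_refl _⟩
    have heE' : e ∉ E' := Finset.notMem_erase _ _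
    -- reaching within parts, through the bridge e
    have hreachV1 : ∀ u ∈ V1, ∀ W : Finset LEdge, E1 ⊆ W → reachL W u e.1.1 := by
      intro u hu W hW
      exact reachL_mono hW (reachL_symm (reach_filter_class (Finset.mem_filter.1 hu).2))
    have hreachV2 : ∀ u ∈ V2, ∀ W : Finset LEdge, E2 ⊆ W → reachL W u e.1.2 := by
      intro u hu W hW
      exact reachL_mono hW (reachL_symm (reach_filter_class (Finset.mem_filter.1 hu).2))
    -- minimality is inherited by each part
    have hE1subE : E1 ⊆ E := fun g hg => (Finset.erase_subset _ _) (Finset.filter_subset _ _ hg)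
    have hE2subE : E2 ⊆ E := fun g hg => (Finset.erase_subset _ _) (Finset.filter_subset _ _ hg)
    have hmin1 : ∀ f ∈ E1, ¬ connL V1 (E1.erase f) := by
      intro f hf hconn1
      have hfE : f ∈ E := hE1subE hf
      have hfe : f ≠ e := fun h => heE' (h ▸ Finset.filter_subset _ _ hf)
      apply hmin f hfE
      have hestep : reachL (E.erase f) e.1.2 e.1.1 :=
        reachL_symm (reachL_adj (Finset.mem_erase.2 ⟨fun h => hfe h.symm, he⟩))
      have hkey : ∀ x ∈ V, reachL (E.erase f) x e.1.1 := by
        intro x hx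
        rcases hcover x hx with h | h
        · exact reachL_mono (Finset.erase_subset_erase f hE1subE)
            (hconn1 x (Finset.mem_filter.2 ⟨hx, h⟩) e.1.1 he1V1)
        · have hE2sub : E2 ⊆ E.erase f := fun g hg =>
            Finset.mem_erase.2 ⟨fun hgf => (Finset.disjoint_left.1 hEdisj hf) (hgf ▸ hg), hE2subE hg⟩
          exact (hreachV2 x (Finset.mem_filter.2 ⟨hx, h⟩) _ hE2sub).trans hestep
      intro a ha b hb
      exact (hkey a ha).trans (reachL_symm (hkey b hb))
    have hmin2 : ∀ f ∈ E2, ¬ connL V2 (E2.erase f) := by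
      intro f hf hconn2
      have hfE : f ∈ E := hE2subE hf
      have hfe : f ≠ e := fun h => heE' (h ▸ Finset.filter_subset _ _ hf)
      apply hmin f hfE
      have hestep : reachL (E.erase f) e.1.1 e.1.2 :=
        reachL_adj (Finset.mem_erase.2 ⟨fun h => hfe h.symm, he⟩)
      have hkey : ∀ x ∈ V, reachL (E.erase f) x e.1.2 := by
        intro x hx
        rcases hcover x hx with h | h
        · have hE1sub : E1 ⊆ E.erase f := fun g hg =>
            Finset.mem_erase.2 ⟨fun hgf => (Finset.disjoint_right.1 hEdisj hf) (hgf ▸ hg), hE1subE hg⟩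
          exact (hreachV1 x (Finset.mem_filter.2 ⟨hx, h⟩) _ hE1sub).trans hestep
        · exact reachL_mono (Finset.erase_subset_erase f hE2subE)
            (hconn2 x (Finset.mem_filter.2 ⟨hx, h⟩) e.1.2 he2V2)
      intro a ha b hb
      exact (hkey a ha).trans (reachL_symm (hkey b hb))
    have h1 := IH E1 (lt_of_le_of_lt (Finset.filter_subset _ _) hsub) V1 ⟨e.1.1, he1V1⟩
      (class_end hendE' e.1.1) (class_conn e.1.1) hmin1
    have h2 := IH E2 (lt_of_le_of_lt (Finset.filter_subset _ _) hsub) V2 ⟨e.1.2, he2V2⟩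
      (class_end hendE' e.1.2) (class_conn e.1.2) hmin2
    have hVc : V1.card + V2.card ≤ V.card := by
      rw [← Finset.card_union_of_disjoint hVdisj]
      exact Finset.card_le_card (Finset.union_subset (Finset.filter_subset _ _)
        (Finset.filter_subset _ _))
    have hEc : E1.card + E2.card = E'.card := by
      rw [← Finset.card_union_of_disjoint hEdisj, ← hEcover]
    have hE'c : E'.card = E.card - 1 := Finset.card_erase_of_mem he
    have hEpos : 1 ≤ E.card := Finset.card_pos.2 ⟨e, he⟩
    omega



lemma exists_spanning_tree {V : Finset ℕ} {A : Finset LEdge} (hV : V.Nonempty)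
    (hend : ∀ e ∈ A, e.1.1 ∈ V ∧ e.1.2 ∈ V) (hconn : connL V A) :
    ∃ T, T ⊆ A ∧ IsLTree V T := by
  have hne : (A.powerset.filter (fun T => connL V T)).Nonempty :=
    ⟨A, Finset.mem_filter.2 ⟨Finset.mem_powerset.2 (Finset.Subset.refl _), hconn⟩⟩
  obtain ⟨T, hT, hTmin⟩ := Finset.exists_min_image _ Finset.card hne
  obtain ⟨hTsub, hTconn⟩ := Finset.mem_filter.1 hT
  rw [Finset.mem_powerset] at hTsub
  have hendT : ∀ e ∈ T, e.1.1 ∈ V ∧ e.1.2 ∈ V := fun e he => hend e (hTsub he)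
  have hmin : ∀ e ∈ T, ¬ connL V (T.erase e) := by
    intro e he hc
    have : T.erase e ∈ A.powerset.filter (fun T => connL V T) :=
      Finset.mem_filter.2 ⟨Finset.mem_powerset.2 ((Finset.erase_subset _ _).trans hTsub), hc⟩
    have h1 := hTmin _ this
    have h2 : (T.erase e).card = T.card - 1 := Finset.card_erase_of_mem he
    have h3 : 1 ≤ T.card := Finset.card_pos.2 ⟨e, he⟩
    omega
  have hle := conn_card_le T V hendT hTconn
  have hge := min_conn_card T V hV hendT hTconn hmin
  exact ⟨T, hTsub, hTconn, by omega⟩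

lemma tree_bridge {V : Finset ℕ} {T : Finset LEdge} {e : LEdge} (hV : V.Nonempty)
    (hend : ∀ f ∈ T, f.1.1 ∈ V ∧ f.1.2 ∈ V) (hT : IsLTree V T) (he : e ∈ T) :
    ¬ reachL (T.erase e) e.1.1 e.1.2 := by
  intro hr
  have hc : connL V (T.erase e) := fun a ha b hb =>
    reach_subst (Finset.Subset.refl _) hr (hT.1 a ha b hb)
  have hle := conn_card_le (T.erase e) V (fun f hf => hend f (Finset.mem_of_mem_erase hf)) hc
  have h2 : (T.erase e).card = T.card - 1 := Finset.card_erase_of_mem he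
  have h3 : 1 ≤ T.card := Finset.card_pos.2 ⟨e, he⟩
  have := hT.2
  omega

lemma tree_exchange {V : Finset ℕ} {T : Finset LEdge} {f g : LEdge}
    (hend : ∀ e ∈ T, e.1.1 ∈ V ∧ e.1.2 ∈ V) (hT : IsLTree V T)
    (hf : f ∉ T) (hf1 : f.1.1 ∈ V) (hf2 : f.1.2 ∈ V) (hg : g ∈ T)
    (hcut : ¬ reachL (T.erase g) f.1.1 f.1.2) :
    IsLTree V (insert f (T.erase g)) := by
  set T' := insert f (T.erase g) with hT'
  have hsub : T.erase g ⊆ T' := Finset.subset_insert _ _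
  have hanchor : ∀ x ∈ V, reachL (T.erase g) x g.1.1 ∨ reachL (T.erase g) x g.1.2 := by
    intro x hx
    rcases reach_truncate (hT.1 x hx g.1.1 (hend g hg).1) with h | h | h
    · exact Or.inl h
    · exact Or.inl h
    · exact Or.inr h
  have hfstep : reachL T' f.1.1 f.1.2 := reachL_adj (Finset.mem_insert_self _ _)
  have hgg : reachL T' g.1.1 g.1.2 := by
    rcases hanchor f.1.1 hf1 with h1 | h1 <;> rcases hanchor f.1.2 hf2 with h2 | h2
    · exact absurd (h1.trans (reachL_symm h2)) hcut
    · exact ((reachL_symm (reachL_mono hsub h1)).trans hfstep).trans (reachL_mono hsub h2)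
    · exact ((reachL_symm (reachL_mono hsub h2)).trans (reachL_symm hfstep)).trans
        (reachL_mono hsub h1)
    · exact absurd (h1.trans (reachL_symm h2)) hcut
  constructor
  · intro a ha b hb
    exact reach_subst hsub hgg (hT.1 a ha b hb)
  · have hfe : f ∉ T.erase g := fun h => hf (Finset.mem_of_mem_erase h)
    have h1 : T'.card = (T.erase g).card + 1 := Finset.card_insert_of_notMem hfe
    have h2 : (T.erase g).card = T.card - 1 := Finset.card_erase_of_mem hg
    have h3 : 1 ≤ T.card := Finset.card_pos.2 ⟨g, hg⟩
    have := hT.2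
    omega

lemma tree_pathset {V : Finset ℕ} {T : Finset LEdge} (hV : V.Nonempty)
    (hend : ∀ f ∈ T, f.1.1 ∈ V ∧ f.1.2 ∈ V) (hT : IsLTree V T) {x y : ℕ}
    (hx : x ∈ V) (hy : y ∈ V) :
    ∃ W, W ⊆ T ∧ reachL W x y ∧ ∀ g ∈ W, ¬ reachL (T.erase g) x y := by
  have hne : (T.powerset.filter (fun W => reachL W x y)).Nonempty :=
    ⟨T, Finset.mem_filter.2 ⟨Finset.mem_powerset.2 (Finset.Subset.refl _), hT.1 x hx y hy⟩⟩
  obtain ⟨W, hW, hWmin⟩ := Finset.exists_min_image _ Finset.card hne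
  obtain ⟨hWsub, hWreach⟩ := Finset.mem_filter.1 hW
  rw [Finset.mem_powerset] at hWsub
  refine ⟨W, hWsub, hWreach, ?_⟩
  intro g hg hr
  have hW'sub : W.erase g ⊆ T.erase g := Finset.erase_subset_erase _ hWsub
  have hmin : ∀ W'' ∈ T.powerset.filter (fun W => reachL W x y), W.card ≤ W''.card := hWmin
  have hWr : reachL (insert g (W.erase g)) x y := by
    rw [Finset.insert_erase hg]; exact hWreach
  have hbr := tree_bridge hV hend hT (hWsub hg)
  rcases reach_insert_elim hWr with h | ⟨h1, h2⟩ | ⟨h1, h2⟩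
  · have : W.erase g ∈ T.powerset.filter (fun W => reachL W x y) :=
      Finset.mem_filter.2 ⟨Finset.mem_powerset.2 (hW'sub.trans (Finset.erase_subset _ _)), h⟩
    have h1 := hmin _ this
    have h2 : (W.erase g).card = W.card - 1 := Finset.card_erase_of_mem hg
    have h3 : 1 ≤ W.card := Finset.card_pos.2 ⟨g, hg⟩
    omega
  · exact hbr (((reachL_symm (reachL_mono hW'sub h1)).trans hr).trans (reachL_mono hW'sub h2))
  · exact hbr (((reachL_symm (reachL_mono hW'sub h2)).trans
      (reachL_symm hr)).trans (reachL_mono hW'sub h1))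

/-- the defining property of the `ω`-canonical spanning tree inside `A`. -/
def Pprop (V : Finset ℕ) (ω : LEdge → ℝ) (A T : Finset LEdge) : Prop :=
  T ⊆ A ∧ IsLTree V T ∧
    ∀ f ∈ A, f ∉ T → ∀ g ∈ T, ¬ reachL (T.erase g) f.1.1 f.1.2 → ω f < ω g

lemma Pprop_sub_unique {V : Finset ℕ} {ω : LEdge → ℝ} {A T1 T2 : Finset LEdge}
    (hV : V.Nonempty) (hend : ∀ e ∈ A, e.1.1 ∈ V ∧ e.1.2 ∈ V)
    (h1 : Pprop V ω A T1) (h2 : Pprop V ω A T2) : T1 ⊆ T2 := by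
  intro e he
  by_contra heT2
  obtain ⟨h1sub, h1tree, h1min⟩ := h1
  obtain ⟨h2sub, h2tree, h2min⟩ := h2
  have hend1 : ∀ f ∈ T1, f.1.1 ∈ V ∧ f.1.2 ∈ V := fun f hf => hend f (h1sub hf)
  have hend2 : ∀ f ∈ T2, f.1.1 ∈ V ∧ f.1.2 ∈ V := fun f hf => hend f (h2sub hf)
  have he1V : e.1.1 ∈ V := (hend1 e he).1
  have he2V : e.1.2 ∈ V := (hend1 e he).2
  have hbr : ¬ reachL (T1.erase e) e.1.1 e.1.2 := tree_bridge hV hend1 h1tree he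
  obtain ⟨W, hWsub, hWreach, hWpath⟩ := tree_pathset hV hend2 h2tree he1V he2V
  have hcross : ∃ g ∈ W, ¬ (reachL (T1.erase e) e.1.1 g.1.1 ↔ reachL (T1.erase e) e.1.1 g.1.2) := by
    by_contra hall
    push_neg at hall
    have := reach_pres (fun v => reachL (T1.erase e) e.1.1 v) hall hWreach
    exact hbr (this.mp (reachL_refl _))
  obtain ⟨g, hgW, hgcross⟩ := hcross
  have hgT2 : g ∈ T2 := hWsub hgW
  have hgcut : ¬ reachL (T1.erase e) g.1.1 g.1.2 := by
    intro hr
    apply hgcross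
    constructor
    · intro h; exact h.trans hr
    · intro h; exact h.trans (reachL_symm hr)
  have hgT1 : g ∉ T1 := by
    intro hgT1
    have hge : g ≠ e := fun h => heT2 (h ▸ hgT2)
    exact hgcut (reachL_adj (Finset.mem_erase.2 ⟨hge, hgT1⟩))
  have ha := h1min g (h2sub hgT2) hgT1 e he hgcut
  have hb := h2min e (h1sub he) heT2 g hgT2 (hWpath g hgW)
  linarith

lemma Pprop_unique {V : Finset ℕ} {ω : LEdge → ℝ} {A T1 T2 : Finset LEdge}
    (hV : V.Nonempty) (hend : ∀ e ∈ A, e.1.1 ∈ V ∧ e.1.2 ∈ V)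
    (h1 : Pprop V ω A T1) (h2 : Pprop V ω A T2) : T1 = T2 :=
  Finset.Subset.antisymm (Pprop_sub_unique hV hend h1 h2) (Pprop_sub_unique hV hend h2 h1)

lemma Pprop_exists {V : Finset ℕ} {ω : LEdge → ℝ} {A : Finset LEdge}
    (hV : V.Nonempty) (hend : ∀ e ∈ A, e.1.1 ∈ V ∧ e.1.2 ∈ V)
    (hω : Function.Injective ω) (hconn : connL V A) : ∃ T, Pprop V ω A T := by
  have hne : (A.powerset.filter (fun T => IsLTree V T)).Nonempty := by
    obtain ⟨T, hTsub, hT⟩ := exists_spanning_tree hV hend hconn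
    exact ⟨T, Finset.mem_filter.2 ⟨Finset.mem_powerset.2 hTsub, hT⟩⟩
  obtain ⟨T, hT, hTmax⟩ := Finset.exists_max_image _ (fun T => ∑ e ∈ T, ω e) hne
  obtain ⟨hTsub, hTtree⟩ := Finset.mem_filter.1 hT
  rw [Finset.mem_powerset] at hTsub
  refine ⟨T, hTsub, hTtree, ?_⟩
  intro f hf hfT g hg hcut
  by_contra hlt
  push_neg at hlt
  have hfg : f ≠ g := fun h => hfT (h ▸ hg)
  have hglt : ω g < ω f := lt_of_le_of_ne hlt (fun h => hfg (hω h).symm)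
  have hendT : ∀ e ∈ T, e.1.1 ∈ V ∧ e.1.2 ∈ V := fun e he => hend e (hTsub he)
  have hT' := tree_exchange hendT hTtree hfT (hend f hf).1 (hend f hf).2 hg hcut
  have hT'mem : insert f (T.erase g) ∈ A.powerset.filter (fun T => IsLTree V T) :=
    Finset.mem_filter.2 ⟨Finset.mem_powerset.2
      (Finset.insert_subset hf ((Finset.erase_subset _ _).trans hTsub)), hT'⟩
  have hmax := hTmax _ hT'mem
  have hfe : f ∉ T.erase g := fun h => hfT (Finset.mem_of_mem_erase h)
  rw [Finset.sum_insert hfe] at hmax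
  have hsum : ∑ e ∈ T.erase g, ω e + ω g = ∑ e ∈ T, ω e := Finset.sum_erase_add _ _ hg
  linarith



def ptree (V : Finset ℕ) (ω : LEdge → ℝ) (A : Finset LEdge) : Finset LEdge :=
  if h : ∃ T, Pprop V ω A T then h.choose else ∅

lemma ptree_spec {V : Finset ℕ} {ω : LEdge → ℝ} {A : Finset LEdge}
    (hV : V.Nonempty) (hend : ∀ e ∈ A, e.1.1 ∈ V ∧ e.1.2 ∈ V)
    (hω : Function.Injective ω) (hconn : connL V A) : Pprop V ω A (ptree V ω A) := by
  have h := Pprop_exists hV hend hω hconn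
  rw [ptree, dif_pos h]
  exact h.choose_spec

lemma ptree_eq {V : Finset ℕ} {ω : LEdge → ℝ} {A T : Finset LEdge}
    (hV : V.Nonempty) (hend : ∀ e ∈ A, e.1.1 ∈ V ∧ e.1.2 ∈ V)
    (hω : Function.Injective ω) (hT : Pprop V ω A T) : ptree V ω A = T := by
  have h : ∃ T, Pprop V ω A T := ⟨T, hT⟩
  rw [ptree, dif_pos h]
  exact Pprop_unique hV hend h.choose_spec hT

lemma sum_pow_card (F : Finset LEdge) (z : ℤ) :
    ∑ X ∈ F.powerset, z ^ X.card = (z + 1) ^ F.card := by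
  classical
  induction F using Finset.induction_on with
  | empty => simp
  | insert a s hx ih =>
    rw [Finset.powerset_insert, Finset.sum_union, Finset.sum_image, Finset.card_insert_of_notMem hx,
      pow_succ]
    · have : ∀ X ∈ s.powerset, z ^ (insert a X).card = z * z ^ X.card := by
        intro X hX
        rw [Finset.card_insert_of_notMem (fun h => hx (Finset.mem_powerset.1 hX h)), pow_succ]
        ring
      rw [Finset.sum_congr rfl this, ← Finset.mul_sum, ih]
      ring
    · intro X hX Y hY hXY
      have ha : ∀ Z ∈ s.powerset, a ∉ Z := fun Z hZ h => hx (Finset.mem_powerset.1 hZ h)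
      have := congrArg (fun W => W.erase a) hXY
      simpa [Finset.erase_insert (ha X hX), Finset.erase_insert (ha Y hY)] using this
    · rw [Finset.disjoint_right]
      intro X hX
      obtain ⟨Y, hY, rfl⟩ := Finset.mem_image.1 hX
      intro hmem
      exact hx (Finset.mem_powerset.1 hmem (Finset.mem_insert_self a Y))

/-- the spanning-tree expansion equals the connected-subgraph expansion. -/
lemma crux (V : Finset ℕ) (E : Finset LEdge) (hV : V.Nonempty)
    (hend : ∀ e ∈ E, e.1.1 ∈ V ∧ e.1.2 ∈ V) (ω : LEdge → ℝ) (hω : Function.Injective ω)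
    (y : ℤ) :
    ∑ T ∈ E.powerset.filter (fun T => IsLTree V T), y ^ eaL E T ω
      = ∑ A ∈ E.powerset.filter (fun A => connL V A), (y - 1) ^ (A.card + 1 - V.card) := by
  have step1 : ∀ T, y ^ eaL E T ω
      = ∑ X ∈ (E.filter (extActiveL T ω)).powerset, (y - 1) ^ X.card := by
    intro T
    rw [sum_pow_card, sub_add_cancel, eaL]
  rw [Finset.sum_congr rfl (fun T _ => step1 T), Finset.sum_sigma']
  refine Finset.sum_nbij' (fun p => p.1 ∪ p.2) (fun A => ⟨ptree V ω A, A \ ptree V ω A⟩)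
    ?_ ?_ ?_ ?_ ?_
  · rintro ⟨T, X⟩ hp
    rw [Finset.mem_sigma] at hp
    obtain ⟨hT, hX⟩ := hp
    obtain ⟨hTsub, hTtree⟩ := Finset.mem_filter.1 hT
    rw [Finset.mem_powerset] at hTsub hX
    refine Finset.mem_filter.2 ⟨Finset.mem_powerset.2 ?_, ?_⟩
    · exact Finset.union_subset hTsub (hX.trans (Finset.filter_subset _ _))
    · exact connL_mono (Finset.subset_union_left) hTtree.1
  · intro A hA
    obtain ⟨hAsub, hAconn⟩ := Finset.mem_filter.1 hA
    rw [Finset.mem_powerset] at hAsub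
    have hendA : ∀ e ∈ A, e.1.1 ∈ V ∧ e.1.2 ∈ V := fun e he => hend e (hAsub he)
    have hP := ptree_spec hV hendA hω hAconn
    obtain ⟨hPsub, hPtree, hPmin⟩ := hP
    rw [Finset.mem_sigma]
    constructor
    · exact Finset.mem_filter.2 ⟨Finset.mem_powerset.2 (hPsub.trans hAsub), hPtree⟩
    · rw [Finset.mem_powerset]
      intro f hf
      obtain ⟨hfA, hfT⟩ := Finset.mem_sdiff.1 hf
      refine Finset.mem_filter.2 ⟨hAsub hfA, hfT, ?_, ?_⟩
      · exact hPtree.1 f.1.1 (hendA f hfA).1 f.1.2 (hendA f hfA).2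
      · exact hPmin f hfA hfT
  · rintro ⟨T, X⟩ hp
    rw [Finset.mem_sigma] at hp
    obtain ⟨hT, hX⟩ := hp
    obtain ⟨hTsub, hTtree⟩ := Finset.mem_filter.1 hT
    rw [Finset.mem_powerset] at hTsub hX
    have hXT : Disjoint X T := by
      rw [Finset.disjoint_left]
      intro x hx
      exact ((Finset.mem_filter.1 (hX hx)).2).1
    have hendA : ∀ e ∈ T ∪ X, e.1.1 ∈ V ∧ e.1.2 ∈ V := by
      intro e he
      rcases Finset.mem_union.1 he with h | h
      · exact hend e (hTsub h)
      · exact hend e (Finset.filter_subset _ _ (hX h))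
    have hPT : Pprop V ω (T ∪ X) T := by
      refine ⟨Finset.subset_union_left, hTtree, ?_⟩
      intro f hf hfT g hg hcut
      have hfX : f ∈ X := (Finset.mem_union.1 hf).resolve_left hfT
      exact ((Finset.mem_filter.1 (hX hfX)).2).2.2 g hg hcut
    have h1 : ptree V ω (T ∪ X) = T := ptree_eq hV hendA hω hPT
    have h2 : (T ∪ X) \ T = X := by
      rw [Finset.union_sdiff_left, Finset.sdiff_eq_self_iff_disjoint.2 hXT]
    simp only [h1, h2]
  · intro A hA
    obtain ⟨hAsub, hAconn⟩ := Finset.mem_filter.1 hA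
    rw [Finset.mem_powerset] at hAsub
    have hendA : ∀ e ∈ A, e.1.1 ∈ V ∧ e.1.2 ∈ V := fun e he => hend e (hAsub he)
    have hP := ptree_spec hV hendA hω hAconn
    exact Finset.union_sdiff_of_subset hP.1
  · rintro ⟨T, X⟩ hp
    rw [Finset.mem_sigma] at hp
    obtain ⟨hT, hX⟩ := hp
    obtain ⟨hTsub, hTtree⟩ := Finset.mem_filter.1 hT
    rw [Finset.mem_powerset] at hTsub hX
    have hXT : Disjoint T X := by
      rw [Finset.disjoint_right]
      intro x hx
      exact ((Finset.mem_filter.1 (hX hx)).2).1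
    have hcard : (T ∪ X).card = T.card + X.card := Finset.card_union_of_disjoint hXT
    have htc : T.card + 1 = V.card := hTtree.2
    have hx : (T ∪ X).card + 1 - V.card = X.card := by rw [hcard]; omega
    show (y - 1) ^ X.card = (y - 1) ^ ((T ∪ X).card + 1 - V.card)
    rw [hx]



/-! ### PEdge reachability -/

lemma adjP_symm {E : Finset PEdge} {u v : ℕ} (h : adjP E u v) : adjP E v u := h.symm

lemma reachP_refl {E : Finset PEdge} (x : ℕ) : reachP E x x := Relation.ReflTransGen.refl

lemma reachP_symm {E : Finset PEdge} {x y : ℕ} (h : reachP E x y) : reachP E y x :=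
  by haveI : Std.Symm (adjP E) := ⟨fun _ _ => adjP_symm⟩; exact Std.Symm.symm (r := Relation.ReflTransGen (adjP E)) _ _ h

lemma reachP_trans {E : Finset PEdge} {x y z : ℕ} (h : reachP E x y) (h' : reachP E y z) :
    reachP E x z := Relation.ReflTransGen.trans h h'

lemma reachP_adj {E : Finset PEdge} {e : PEdge} (he : e ∈ E) : reachP E e.1 e.2 :=
  Relation.ReflTransGen.single (Or.inl (by simpa using he))

/-! ### flipMap -/

lemma flipMap_not_mem {C : Finset ℕ} {x : ℕ} (hx : x ∉ C) : flipMap C x = x := dif_neg hx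

lemma flipMap_mem {C : Finset ℕ} {x : ℕ} (hx : x ∈ C) : flipMap C x ∈ C := by
  rw [flipMap, dif_pos hx]
  exact ((C.orderIsoOfFin rfl) _).2

lemma flipMap_invol {C : Finset ℕ} {x : ℕ} (hx : x ∈ C) : flipMap C (flipMap C x) = x := by
  have h1 : flipMap C x ∈ C := flipMap_mem hx
  have hin : C.card - 1 - ((C.orderIsoOfFin rfl).symm ⟨x, hx⟩).1 < C.card := by
    have := ((C.orderIsoOfFin rfl).symm ⟨x, hx⟩).isLt; omega
  have hfx : flipMap C x = ((C.orderIsoOfFin rfl) ⟨C.card - 1 -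
      ((C.orderIsoOfFin rfl).symm ⟨x, hx⟩).1, hin⟩).1 := by
    rw [flipMap, dif_pos hx]
  have h2 : (C.orderIsoOfFin rfl).symm ⟨flipMap C x, h1⟩ = ⟨C.card - 1 -
      ((C.orderIsoOfFin rfl).symm ⟨x, hx⟩).1, hin⟩ := by
    rw [show (⟨flipMap C x, h1⟩ : {a // a ∈ C}) = (C.orderIsoOfFin rfl) ⟨C.card - 1 -
      ((C.orderIsoOfFin rfl).symm ⟨x, hx⟩).1, hin⟩ from Subtype.ext hfx]
    exact OrderIso.symm_apply_apply _ _
  have h2' : ((C.orderIsoOfFin rfl).symm ⟨flipMap C x, h1⟩).1 = C.card - 1 -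
      ((C.orderIsoOfFin rfl).symm ⟨x, hx⟩).1 := congrArg Fin.val h2
  rw [flipMap, dif_pos h1]
  have h3 : (⟨C.card - 1 - ((C.orderIsoOfFin rfl).symm ⟨flipMap C x, h1⟩).1, by
      have := ((C.orderIsoOfFin rfl).symm ⟨flipMap C x, h1⟩).isLt; omega⟩ : Fin C.card)
      = (C.orderIsoOfFin rfl).symm ⟨x, hx⟩ := by
    apply Fin.ext
    show C.card - 1 - ((C.orderIsoOfFin rfl).symm ⟨flipMap C x, h1⟩).1 = _
    rw [h2']
    have := ((C.orderIsoOfFin rfl).symm ⟨x, hx⟩).isLt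
    omega
  rw [h3, OrderIso.apply_symm_apply]

lemma flipMap_lt {C : Finset ℕ} {x y : ℕ} (hx : x ∈ C) (hy : y ∈ C) (h : x < y) :
    flipMap C y < flipMap C x := by
  have hij : (C.orderIsoOfFin rfl).symm ⟨x, hx⟩ < (C.orderIsoOfFin rfl).symm ⟨y, hy⟩ :=
    (C.orderIsoOfFin rfl).symm.lt_iff_lt.2 (Subtype.mk_lt_mk.2 h)
  rw [flipMap, dif_pos hy, flipMap, dif_pos hx]
  refine Subtype.coe_lt_coe.2 ((C.orderIsoOfFin rfl).lt_iff_lt.2 ?_)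
  have h1 := ((C.orderIsoOfFin rfl).symm ⟨x, hx⟩).isLt
  have h2 := ((C.orderIsoOfFin rfl).symm ⟨y, hy⟩).isLt
  have h3 : ((C.orderIsoOfFin rfl).symm ⟨x, hx⟩).1 < ((C.orderIsoOfFin rfl).symm ⟨y, hy⟩).1 := hij
  exact Fin.mk_lt_mk.2 (by omega)

lemma flipMap_inj {C : Finset ℕ} {x y : ℕ} (hx : x ∈ C) (hy : y ∈ C)
    (h : flipMap C x = flipMap C y) : x = y := by
  rw [← flipMap_invol hx, h, flipMap_invol hy]

/-! ### components -/

lemma mem_comp {V : Finset ℕ} {E : Finset PEdge} {x y : ℕ} :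
    y ∈ comp V E x ↔ y ∈ V ∧ reachP E x y := Finset.mem_filter

lemma comp_self {V : Finset ℕ} {E : Finset PEdge} {x : ℕ} (hx : x ∈ V) : x ∈ comp V E x :=
  mem_comp.2 ⟨hx, reachP_refl x⟩

lemma comp_subset {V : Finset ℕ} {E : Finset PEdge} {x : ℕ} : comp V E x ⊆ V :=
  Finset.filter_subset _ _

lemma comp_eq_of_reach {V : Finset ℕ} {E : Finset PEdge} {x y : ℕ} (h : reachP E x y) :
    comp V E x = comp V E y := by
  ext z
  simp only [mem_comp]
  exact and_congr_right (fun _ => ⟨fun hz => (reachP_symm h).trans hz, fun hz => h.trans hz⟩)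

lemma comp_eq_of_mem {V : Finset ℕ} {E : Finset PEdge} {x y : ℕ} (h : y ∈ comp V E x) :
    comp V E x = comp V E y := comp_eq_of_reach (mem_comp.1 h).2

lemma reach_of_mem_comp {V : Finset ℕ} {E : Finset PEdge} {x a b : ℕ}
    (ha : a ∈ comp V E x) (hb : b ∈ comp V E x) : reachP E a b :=
  (reachP_symm (mem_comp.1 ha).2).trans (mem_comp.1 hb).2



def dPhi (U : Finset ℕ) (F : Finset PEdge) (v : ℕ) : ℕ := flipMap (comp U F v) v

def dFs (U : Finset ℕ) (F : Finset PEdge) : Finset PEdge :=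
  F.image (fun e => (dPhi U F e.2, dPhi U F e.1))

def dS (U : Finset ℕ) (F : Finset PEdge) (S : Finset ℕ) : Finset ℕ :=
  U.filter (fun v => dPhi U F v ∉ S)

variable {U : Finset ℕ} {F : Finset PEdge}

lemma mem_dS {S : Finset ℕ} {v : ℕ} : v ∈ dS U F S ↔ v ∈ U ∧ dPhi U F v ∉ S :=
  Finset.mem_filter

lemma comp_edge (hFU : ∀ e ∈ F, e.1 ∈ U ∧ e.2 ∈ U) {e : PEdge} (he : e ∈ F) :
    comp U F e.1 = comp U F e.2 := comp_eq_of_reach (reachP_adj he)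

lemma dPhi_mem {v : ℕ} (hv : v ∈ U) : dPhi U F v ∈ comp U F v := flipMap_mem (comp_self hv)

lemma dPhi_memU {v : ℕ} (hv : v ∈ U) : dPhi U F v ∈ U := comp_subset (dPhi_mem hv)

lemma dPhi_comp {v : ℕ} (hv : v ∈ U) : comp U F (dPhi U F v) = comp U F v :=
  (comp_eq_of_mem (dPhi_mem hv)).symm

lemma dPhi_invol {v : ℕ} (hv : v ∈ U) : dPhi U F (dPhi U F v) = v := by
  show flipMap (comp U F (dPhi U F v)) (dPhi U F v) = v
  rw [dPhi_comp hv]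
  show flipMap (comp U F v) (flipMap (comp U F v) v) = v
  exact flipMap_invol (comp_self hv)

lemma reach_flip {x y : ℕ} (h : reachP F x y) :
    reachP (dFs U F) (dPhi U F x) (dPhi U F y) := by
  induction h with
  | refl => exact reachP_refl _
  | @tail b c hab hbc IH =>
    refine IH.tail ?_
    rcases hbc with h1 | h1
    · exact Or.inr (Finset.mem_image.2 ⟨(b, c), h1, rfl⟩)
    · exact Or.inl (Finset.mem_image.2 ⟨(c, b), h1, rfl⟩)

lemma reach_dFs_of_same_comp {a b : ℕ} (ha : a ∈ U) (hb : b ∈ comp U F a) :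
    reachP (dFs U F) a b := by
  have hbU : b ∈ U := comp_subset hb
  have hda : dPhi U F a ∈ comp U F a := dPhi_mem ha
  have hdb : dPhi U F b ∈ comp U F a := by
    rw [comp_eq_of_mem hb]; exact dPhi_mem hbU
  have hr : reachP F (dPhi U F a) (dPhi U F b) := reach_of_mem_comp hda hdb
  have := reach_flip (U := U) hr
  rwa [dPhi_invol ha, dPhi_invol hbU] at this

lemma dFs_edge_comp (hFU : ∀ e ∈ F, e.1 ∈ U ∧ e.2 ∈ U) {f : PEdge} (hf : f ∈ dFs U F) :
    ∃ x, x ∈ U ∧ f.1 ∈ comp U F x ∧ f.2 ∈ comp U F x := by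
  obtain ⟨e, he, rfl⟩ := Finset.mem_image.1 hf
  refine ⟨e.1, (hFU e he).1, ?_, ?_⟩
  · rw [comp_edge hFU he]; exact dPhi_mem (hFU e he).2
  · exact dPhi_mem (hFU e he).1

lemma reach_dFs_comp (hFU : ∀ e ∈ F, e.1 ∈ U ∧ e.2 ∈ U) {v w : ℕ} (hv : v ∈ U)
    (h : reachP (dFs U F) v w) : w ∈ comp U F v := by
  induction h with
  | refl => exact comp_self hv
  | @tail b c hab hbc IH =>
    have hf : ∃ f ∈ dFs U F, (f.1 = b ∧ f.2 = c) ∨ (f.1 = c ∧ f.2 = b) := by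
      rcases hbc with h1 | h1
      · exact ⟨(b, c), h1, Or.inl ⟨rfl, rfl⟩⟩
      · exact ⟨(c, b), h1, Or.inr ⟨rfl, rfl⟩⟩
    obtain ⟨f, hfm, hor⟩ := hf
    obtain ⟨x, hxU, h1, h2⟩ := dFs_edge_comp hFU hfm
    have hbx : b ∈ comp U F x := by
      rcases hor with ⟨e1, e2⟩ | ⟨e1, e2⟩
      · exact e1 ▸ h1
      · exact e2 ▸ h2
    have hcx : c ∈ comp U F x := by
      rcases hor with ⟨e1, e2⟩ | ⟨e1, e2⟩
      · exact e2 ▸ h2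
      · exact e1 ▸ h1
    have hxv : comp U F x = comp U F v := by
      rw [comp_eq_of_mem hbx, comp_eq_of_mem IH]
    exact hxv ▸ hcx

lemma comp_dFs (hFU : ∀ e ∈ F, e.1 ∈ U ∧ e.2 ∈ U) {v : ℕ} (hv : v ∈ U) :
    comp U (dFs U F) v = comp U F v := by
  apply Finset.Subset.antisymm
  · intro w hw
    exact reach_dFs_comp hFU hv (mem_comp.1 hw).2
  · intro w hw
    exact mem_comp.2 ⟨comp_subset hw, reach_dFs_of_same_comp hv hw⟩

lemma dPhi_dFs (hFU : ∀ e ∈ F, e.1 ∈ U ∧ e.2 ∈ U) {v : ℕ} (hv : v ∈ U) :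
    dPhi U (dFs U F) v = dPhi U F v := by
  show flipMap (comp U (dFs U F) v) v = dPhi U F v
  rw [comp_dFs hFU hv]
  rfl

lemma dFs_map_map (hFU : ∀ e ∈ F, e.1 ∈ U ∧ e.2 ∈ U) {e : PEdge} (he : e ∈ F) :
    (dPhi U (dFs U F) (dPhi U F e.1), dPhi U (dFs U F) (dPhi U F e.2)) = e := by
  have h1 : e.1 ∈ U := (hFU e he).1
  have h2 : e.2 ∈ U := (hFU e he).2
  rw [dPhi_dFs hFU (dPhi_memU h1), dPhi_dFs hFU (dPhi_memU h2), dPhi_invol h1, dPhi_invol h2]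

lemma dFs_invol (hFU : ∀ e ∈ F, e.1 ∈ U ∧ e.2 ∈ U) : dFs U (dFs U F) = F := by
  have himg : dFs U (dFs U F) = F.image
      ((fun f => (dPhi U (dFs U F) f.2, dPhi U (dFs U F) f.1)) ∘
        (fun e => (dPhi U F e.2, dPhi U F e.1))) := by
    show (dFs U F).image (fun f => (dPhi U (dFs U F) f.2, dPhi U (dFs U F) f.1)) = _
    show (F.image (fun e => (dPhi U F e.2, dPhi U F e.1))).image
      (fun f => (dPhi U (dFs U F) f.2, dPhi U (dFs U F) f.1)) = _
    rw [Finset.image_image]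
  rw [himg]
  have heq : Set.EqOn ((fun f => (dPhi U (dFs U F) f.2, dPhi U (dFs U F) f.1)) ∘
      (fun e => (dPhi U F e.2, dPhi U F e.1))) id ↑F := by
    intro e he
    simp only [Function.comp, id]
    exact dFs_map_map hFU (by simpa using he)
  rw [Finset.image_congr heq, Finset.image_id]

lemma dFs_card (hFU : ∀ e ∈ F, e.1 ∈ U ∧ e.2 ∈ U) : (dFs U F).card = F.card := by
  show (F.image (fun e => (dPhi U F e.2, dPhi U F e.1))).card = F.card
  apply Finset.card_image_of_injOn
  intro e he e' he' heq
  have h1 := dFs_map_map hFU he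
  have h2 := dFs_map_map hFU he'
  have h3 : (dPhi U F e.2, dPhi U F e.1) = (dPhi U F e'.2, dPhi U F e'.1) := heq
  rw [← h1, ← h2, show dPhi U F e.1 = dPhi U F e'.1 from congrArg Prod.snd h3,
    show dPhi U F e.2 = dPhi U F e'.2 from congrArg Prod.fst h3]

lemma mem_ctE2 {A B : Finset ℕ} {e : PEdge} :
    e ∈ ctE2 A B ↔ e.1 ∈ A ∧ e.2 ∈ B ∧ e.1 < e.2 := by
  rw [ctE2, Finset.mem_filter, Finset.mem_product]
  tauto

lemma ctE2_endU {S : Finset ℕ} (hSU : S ⊆ U) {e : PEdge} (he : e ∈ ctE2 S (U \ S)) :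
    e.1 ∈ U ∧ e.2 ∈ U := by
  obtain ⟨h1, h2, _⟩ := mem_ctE2.1 he
  exact ⟨hSU h1, (Finset.mem_sdiff.1 h2).1⟩

lemma dS_subU {S : Finset ℕ} : dS U F S ⊆ U := Finset.filter_subset _ _

lemma dS_card {S : Finset ℕ} (hSU : S ⊆ U) : (dS U F S).card = U.card - S.card := by
  have hsplit := Finset.card_filter_add_card_filter_not
    (s := U) (p := fun v => dPhi U F v ∉ S)
  have hkey : (U.filter (fun a => ¬ dPhi U F a ∉ S)).card = S.card := by
    apply Finset.card_bij (fun v _ => dPhi U F v)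
    · intro v hv
      exact not_not.1 (Finset.mem_filter.1 hv).2
    · intro v hv w hw heq
      rw [← dPhi_invol (F := F) (Finset.mem_filter.1 hv).1, heq,
        dPhi_invol (Finset.mem_filter.1 hw).1]
    · intro s hs
      refine ⟨dPhi U F s, Finset.mem_filter.2 ⟨dPhi_memU (hSU hs), ?_⟩, ?_⟩
      · rw [not_not, dPhi_invol (hSU hs)]; exact hs
      · rw [dPhi_invol (hSU hs)]
  have hcard : S.card ≤ U.card := Finset.card_le_card hSU
  have hds : (dS U F S).card = (U.filter (fun v => dPhi U F v ∉ S)).card := rfl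
  omega

lemma dFs_sub_ctE2 {S : Finset ℕ} (hSU : S ⊆ U) (hFsub : F ⊆ ctE2 S (U \ S)) :
    dFs U F ⊆ ctE2 (dS U F S) (U \ dS U F S) := by
  have hFU : ∀ e ∈ F, e.1 ∈ U ∧ e.2 ∈ U := fun e he => ctE2_endU hSU (hFsub he)
  intro f hf
  obtain ⟨e, he, rfl⟩ := Finset.mem_image.1 hf
  obtain ⟨he1S, he2S, helt⟩ := mem_ctE2.1 (hFsub he)
  have he1U : e.1 ∈ U := (hFU e he).1
  have he2U : e.2 ∈ U := (hFU e he).2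
  have he2S' : e.2 ∉ S := (Finset.mem_sdiff.1 he2S).2
  rw [mem_ctE2]
  refine ⟨?_, ?_, ?_⟩
  · exact mem_dS.2 ⟨dPhi_memU he2U, by rw [dPhi_invol he2U]; exact he2S'⟩
  · rw [Finset.mem_sdiff]
    refine ⟨dPhi_memU he1U, fun hmem => ?_⟩
    exact (mem_dS.1 hmem).2 (by rw [dPhi_invol he1U]; exact he1S)
  · show dPhi U F e.2 < dPhi U F e.1
    have hc : comp U F e.2 = comp U F e.1 := (comp_edge hFU he).symm
    show flipMap (comp U F e.2) e.2 < flipMap (comp U F e.1) e.1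
    rw [hc]
    exact flipMap_lt (comp_self he1U) (hc ▸ comp_self he2U) helt

lemma dS_invol {S : Finset ℕ} (hSU : S ⊆ U) (hFU : ∀ e ∈ F, e.1 ∈ U ∧ e.2 ∈ U) :
    dS U (dFs U F) (dS U F S) = S := by
  ext v
  rw [mem_dS]
  constructor
  · rintro ⟨hvU, hv⟩
    rw [dPhi_dFs hFU hvU] at hv
    by_contra hvS
    exact hv (mem_dS.2 ⟨dPhi_memU hvU, by rw [dPhi_invol hvU]; exact hvS⟩)
  · intro hvS
    have hvU : v ∈ U := hSU hvS
    refine ⟨hvU, fun hmem => ?_⟩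
    rw [dPhi_dFs hFU hvU] at hmem
    exact (mem_dS.1 hmem).2 (by rw [dPhi_invol hvU]; exact hvS)



def Fpart (A : Finset LEdge) : Finset PEdge := (A.filter (fun e => e.2 = 0)).image Prod.fst

def dA (U : Finset ℕ) (A : Finset LEdge) : Finset LEdge :=
  A.filter (fun e => ¬ e.2 = 0) ∪ (dFs U (Fpart A)).image (fun p => (p, 0))

lemma mem_qE {U : Finset ℕ} {EH : Finset LEdge} {S : Finset ℕ} {e : LEdge} :
    e ∈ qE U EH S ↔ e ∈ EH ∨ (e.2 = 0 ∧ e.1 ∈ ctE2 S (U \ S)) := by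
  rw [qE, Finset.mem_union]
  constructor
  · rintro (h | h)
    · exact Or.inl h
    · obtain ⟨p, hp, rfl⟩ := Finset.mem_image.1 h
      exact Or.inr ⟨rfl, hp⟩
  · rintro (h | ⟨h0, h1⟩)
    · exact Or.inl h
    · refine Or.inr (Finset.mem_image.2 ⟨e.1, h1, ?_⟩)
      exact Prod.ext rfl h0.symm

section ctx

variable {VH : Finset ℕ} {EH : Finset LEdge} {U S : Finset ℕ} {A : Finset LEdge}

lemma Fpart_sub (hEH : ∀ e ∈ EH, e.2 ≠ 0) (hA : A ⊆ qE U EH S) :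
    Fpart A ⊆ ctE2 S (U \ S) := by
  intro p hp
  obtain ⟨e, he, rfl⟩ := Finset.mem_image.1 hp
  obtain ⟨heA, he0⟩ := Finset.mem_filter.1 he
  rcases mem_qE.1 (hA heA) with h | ⟨-, h⟩
  · exact absurd he0 (hEH e h)
  · exact h

lemma filter0_eq : A.filter (fun e => e.2 = 0) = (Fpart A).image (fun p => (p, 0)) := by
  ext e
  constructor
  · intro he
    obtain ⟨heA, he0⟩ := Finset.mem_filter.1 he
    refine Finset.mem_image.2 ⟨e.1, Finset.mem_image.2 ⟨e, he, rfl⟩, ?_⟩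
    exact Prod.ext rfl he0.symm
  · intro he
    obtain ⟨p, hp, rfl⟩ := Finset.mem_image.1 he
    obtain ⟨f, hf, rfl⟩ := Finset.mem_image.1 hp
    obtain ⟨hfA, hf0⟩ := Finset.mem_filter.1 hf
    have : (f.1, 0) = f := Prod.ext rfl hf0.symm
    rw [this]
    exact Finset.mem_filter.2 ⟨hfA, hf0⟩

lemma A_split : A.filter (fun e => ¬ e.2 = 0) ∪ A.filter (fun e => e.2 = 0) = A := by
  ext e
  simp only [Finset.mem_union, Finset.mem_filter]
  by_cases h : e.2 = 0 <;> tauto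

lemma Fpart_dA : Fpart (dA U A) = dFs U (Fpart A) := by
  ext p
  constructor
  · intro hp
    obtain ⟨e, he, rfl⟩ := Finset.mem_image.1 hp
    obtain ⟨heA, he0⟩ := Finset.mem_filter.1 he
    rcases Finset.mem_union.1 heA with h | h
    · exact absurd he0 (Finset.mem_filter.1 h).2
    · obtain ⟨q, hq, rfl⟩ := Finset.mem_image.1 h
      exact hq
  · intro hp
    refine Finset.mem_image.2 ⟨(p, 0), Finset.mem_filter.2 ⟨?_, rfl⟩, rfl⟩
    exact Finset.mem_union_right _ (Finset.mem_image.2 ⟨p, hp, rfl⟩)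

lemma Fpart_card : (Fpart A).card = (A.filter (fun e => e.2 = 0)).card := by
  rw [Fpart]
  apply Finset.card_image_of_injOn
  intro e he e' he' heq
  have h0 : e.2 = 0 := (Finset.mem_filter.1 he).2
  have h0' : e'.2 = 0 := (Finset.mem_filter.1 he').2
  exact Prod.ext heq (h0.trans h0'.symm)

lemma dA_card (hFU : ∀ e ∈ Fpart A, e.1 ∈ U ∧ e.2 ∈ U) : (dA U A).card = A.card := by
  have hdisj : Disjoint (A.filter (fun e => ¬ e.2 = 0))
      ((dFs U (Fpart A)).image (fun p => (p, 0))) := by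
    rw [Finset.disjoint_left]
    intro e he hmem
    obtain ⟨p, hp, rfl⟩ := Finset.mem_image.1 hmem
    exact (Finset.mem_filter.1 he).2 rfl
  rw [dA, Finset.card_union_of_disjoint hdisj]
  have h1 : ((dFs U (Fpart A)).image (fun p => (p, 0))).card = (dFs U (Fpart A)).card :=
    Finset.card_image_of_injective _ (fun a b hab => congrArg Prod.fst hab)
  rw [h1, dFs_card hFU, Fpart_card]
  have := Finset.card_filter_add_card_filter_not
    (s := A) (p := fun e : LEdge => e.2 = 0)
  omega

lemma dA_sub (hEH : ∀ e ∈ EH, e.2 ≠ 0) (hA : A ⊆ qE U EH S) (hSU : S ⊆ U) :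
    dA U A ⊆ qE U EH (dS U (Fpart A) S) := by
  intro e he
  rcases Finset.mem_union.1 he with h | h
  · obtain ⟨heA, he0⟩ := Finset.mem_filter.1 h
    rcases mem_qE.1 (hA heA) with hh | ⟨h0, -⟩
    · exact mem_qE.2 (Or.inl hh)
    · exact absurd h0 he0
  · obtain ⟨p, hp, rfl⟩ := Finset.mem_image.1 h
    exact mem_qE.2 (Or.inr ⟨rfl, dFs_sub_ctE2 hSU (Fpart_sub hEH hA) hp⟩)

lemma reachP_to_reachL {G : Finset PEdge} {a b : ℕ} (h : reachP G a b) :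
    reachL (G.image (fun p => (p, 0))) a b := by
  induction h with
  | refl => exact reachL_refl a
  | @tail x y hax hxy IH =>
    refine IH.tail ?_
    rcases hxy with h1 | h1
    · exact ⟨((x, y), 0), Finset.mem_image.2 ⟨(x, y), h1, rfl⟩, Or.inl rfl⟩
    · exact ⟨((y, x), 0), Finset.mem_image.2 ⟨(y, x), h1, rfl⟩, Or.inr rfl⟩

lemma reach_dA (hFU : ∀ e ∈ Fpart A, e.1 ∈ U ∧ e.2 ∈ U) {x y : ℕ}
    (h : reachL A x y) : reachL (dA U A) x y := by
  induction h with
  | refl => exact reachL_refl x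
  | @tail b c hab hbc IH =>
    obtain ⟨e, he, hor⟩ := hbc
    by_cases he0 : e.2 = 0
    · have hpF : e.1 ∈ Fpart A := Finset.mem_image.2 ⟨e, Finset.mem_filter.2 ⟨he, he0⟩, rfl⟩
      have h1U : e.1.1 ∈ U := (hFU e.1 hpF).1
      have hreach : reachP (dFs U (Fpart A)) e.1.1 e.1.2 :=
        reach_dFs_of_same_comp h1U (mem_comp.2 ⟨(hFU e.1 hpF).2, reachP_adj hpF⟩)
      have hreachL : reachL (dA U A) e.1.1 e.1.2 :=
        reachL_mono (Finset.subset_union_right) (reachP_to_reachL hreach)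
      rcases hor with h1 | h1
      · have hb : e.1.1 = b := congrArg Prod.fst h1
        have hc : e.1.2 = c := congrArg Prod.snd h1
        exact IH.trans (hb ▸ hc ▸ hreachL)
      · have hb : e.1.2 = b := congrArg Prod.snd h1
        have hc : e.1.1 = c := congrArg Prod.fst h1
        exact IH.trans (hb ▸ hc ▸ reachL_symm hreachL)
    · exact IH.tail ⟨e, Finset.mem_union_left _ (Finset.mem_filter.2 ⟨he, he0⟩), hor⟩

lemma dA_invol (hFU : ∀ e ∈ Fpart A, e.1 ∈ U ∧ e.2 ∈ U) : dA U (dA U A) = A := by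
  have h1 : (dA U A).filter (fun e => ¬ e.2 = 0) = A.filter (fun e => ¬ e.2 = 0) := by
    ext e
    constructor
    · intro he
      obtain ⟨heA, he0⟩ := Finset.mem_filter.1 he
      rcases Finset.mem_union.1 heA with h | h
      · exact h
      · obtain ⟨p, hp, rfl⟩ := Finset.mem_image.1 h
        exact absurd rfl he0
    · intro he
      exact Finset.mem_filter.2 ⟨Finset.mem_union_left _ he, (Finset.mem_filter.1 he).2⟩
  rw [dA, h1, Fpart_dA, dFs_invol hFU, ← filter0_eq, A_split]

end ctx

end Aux

/-- `Σ T_G(1,y)` over connected `G = H ∪ Q`, `Q` complete tiered on `U`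
with tier sizes `(p1,p2)`, equals the same sum with tier sizes `(p2,p1)`.  For a
connected graph, `T_G(1,y)` is the spanning-tree expansion `Σ_T y^{ea(T)}` with
respect to any injective edge weighting `ω`. -/
theorem stmt13 (VH : Finset ℕ) (EH : Finset LEdge)
    (hEH : ∀ e ∈ EH, e.1.1 ∈ VH ∧ e.1.2 ∈ VH ∧ e.2 ≠ 0)
    (U : Finset ℕ) (hUV : U ⊆ VH) (hUne : U.Nonempty) (hpos : ∀ v ∈ U, 0 < v)
    (p1 p2 : ℕ) (hp : p1 + p2 = U.card)
    (y : ℤ) (ω : LEdge → ℝ) (hω : Function.Injective ω) :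
    ∑ S ∈ U.powerset.filter (fun S => S.card = p1 ∧ connL VH (qE U EH S)),
      ∑ T ∈ (qE U EH S).powerset.filter (fun T => IsLTree VH T),
        y ^ eaL (qE U EH S) T ω
    = ∑ S ∈ U.powerset.filter (fun S => S.card = p2 ∧ connL VH (qE U EH S)),
        ∑ T ∈ (qE U EH S).powerset.filter (fun T => IsLTree VH T),
          y ^ eaL (qE U EH S) T ω := by
  obtain ⟨u0, hu0⟩ := hUne
  have hVH : VH.Nonempty := ⟨u0, hUV hu0⟩
  have hEH' : ∀ e ∈ EH, e.2 ≠ 0 := fun e he => (hEH e he).2.2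
  have hend : ∀ S : Finset ℕ, S ⊆ U → ∀ e ∈ qE U EH S, e.1.1 ∈ VH ∧ e.1.2 ∈ VH := by
    intro S hSU e he
    rcases mem_qE.1 he with h | ⟨-, h1⟩
    · exact ⟨(hEH e h).1, (hEH e h).2.1⟩
    · obtain ⟨hh1, hh2⟩ := ctE2_endU hSU h1
      exact ⟨hUV hh1, hUV hh2⟩
  -- step 1: rewrite each side via `crux`, and drop the connectivity filter on `S`.
  have hside : ∀ q : ℕ,
      (∑ S ∈ U.powerset.filter (fun S => S.card = q ∧ connL VH (qE U EH S)),
        ∑ T ∈ (qE U EH S).powerset.filter (fun T => IsLTree VH T),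
          y ^ eaL (qE U EH S) T ω)
      = ∑ S ∈ U.powerset.filter (fun S => S.card = q),
          ∑ A ∈ (qE U EH S).powerset.filter (fun A => connL VH A),
            (y - 1) ^ (A.card + 1 - VH.card) := by
    intro q
    have h1 : ∀ S ∈ U.powerset.filter (fun S => S.card = q ∧ connL VH (qE U EH S)),
        (∑ T ∈ (qE U EH S).powerset.filter (fun T => IsLTree VH T),
          y ^ eaL (qE U EH S) T ω)
        = ∑ A ∈ (qE U EH S).powerset.filter (fun A => connL VH A),
            (y - 1) ^ (A.card + 1 - VH.card) := by
      intro S hS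
      exact crux VH (qE U EH S) hVH
        (hend S (Finset.mem_powerset.1 (Finset.mem_of_mem_filter S hS))) ω hω y
    rw [Finset.sum_congr rfl h1]
    apply Finset.sum_subset
    · intro S hS
      exact Finset.mem_filter.2 ⟨(Finset.mem_filter.1 hS).1, (Finset.mem_filter.1 hS).2.1⟩
    · intro S hS hS'
      have hq : S.card = q := (Finset.mem_filter.1 hS).2
      have hnc : ¬ connL VH (qE U EH S) := by
        intro hc
        exact hS' (Finset.mem_filter.2 ⟨(Finset.mem_filter.1 hS).1, hq, hc⟩)
      apply Finset.sum_eq_zero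
      intro A hA
      obtain ⟨hA1, hA2⟩ := Finset.mem_filter.1 hA
      exact absurd (connL_mono (Finset.mem_powerset.1 hA1) hA2) hnc
  rw [hside p1, hside p2]
  -- step 2: the componentwise-dual bijection on pairs (S, A).
  rw [Finset.sum_sigma', Finset.sum_sigma']
  refine Finset.sum_nbij' (fun p => ⟨dS U (Fpart p.2) p.1, dA U p.2⟩)
    (fun p => ⟨dS U (Fpart p.2) p.1, dA U p.2⟩) ?_ ?_ ?_ ?_ ?_
  · rintro ⟨S, A⟩ hp'
    rw [Finset.mem_sigma] at hp'
    obtain ⟨hS, hA⟩ := hp'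
    obtain ⟨hSU, hScard⟩ := Finset.mem_filter.1 hS
    rw [Finset.mem_powerset] at hSU
    obtain ⟨hAsub, hAconn⟩ := Finset.mem_filter.1 hA
    rw [Finset.mem_powerset] at hAsub
    have hFsub : Fpart A ⊆ ctE2 S (U \ S) := Fpart_sub hEH' hAsub
    have hFU : ∀ e ∈ Fpart A, e.1 ∈ U ∧ e.2 ∈ U := fun e he => ctE2_endU hSU (hFsub he)
    rw [Finset.mem_sigma]
    constructor
    · refine Finset.mem_filter.2 ⟨Finset.mem_powerset.2 dS_subU, ?_⟩
      rw [dS_card hSU]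
      have := Finset.card_le_card hSU
      omega
    · refine Finset.mem_filter.2 ⟨Finset.mem_powerset.2 (dA_sub hEH' hAsub hSU), ?_⟩
      exact fun a ha b hb => reach_dA hFU (hAconn a ha b hb)
  · rintro ⟨S, A⟩ hp'
    rw [Finset.mem_sigma] at hp'
    obtain ⟨hS, hA⟩ := hp'
    obtain ⟨hSU, hScard⟩ := Finset.mem_filter.1 hS
    rw [Finset.mem_powerset] at hSU
    obtain ⟨hAsub, hAconn⟩ := Finset.mem_filter.1 hA
    rw [Finset.mem_powerset] at hAsub
    have hFsub : Fpart A ⊆ ctE2 S (U \ S) := Fpart_sub hEH' hAsub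
    have hFU : ∀ e ∈ Fpart A, e.1 ∈ U ∧ e.2 ∈ U := fun e he => ctE2_endU hSU (hFsub he)
    rw [Finset.mem_sigma]
    constructor
    · refine Finset.mem_filter.2 ⟨Finset.mem_powerset.2 dS_subU, ?_⟩
      rw [dS_card hSU]
      have := Finset.card_le_card hSU
      omega
    · refine Finset.mem_filter.2 ⟨Finset.mem_powerset.2 (dA_sub hEH' hAsub hSU), ?_⟩
      exact fun a ha b hb => reach_dA hFU (hAconn a ha b hb)
  · rintro ⟨S, A⟩ hp'
    rw [Finset.mem_sigma] at hp'
    obtain ⟨hS, hA⟩ := hp'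
    obtain ⟨hSU, hScard⟩ := Finset.mem_filter.1 hS
    rw [Finset.mem_powerset] at hSU
    obtain ⟨hAsub, hAconn⟩ := Finset.mem_filter.1 hA
    rw [Finset.mem_powerset] at hAsub
    have hFsub : Fpart A ⊆ ctE2 S (U \ S) := Fpart_sub hEH' hAsub
    have hFU : ∀ e ∈ Fpart A, e.1 ∈ U ∧ e.2 ∈ U := fun e he => ctE2_endU hSU (hFsub he)
    have h1 : Fpart (dA U A) = dFs U (Fpart A) := Fpart_dA
    have h2 : dS U (Fpart (dA U A)) (dS U (Fpart A) S) = S := by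
      rw [h1]; exact dS_invol hSU hFU
    have h3 : dA U (dA U A) = A := dA_invol hFU
    simp only [h2, h3]
  · rintro ⟨S, A⟩ hp'
    rw [Finset.mem_sigma] at hp'
    obtain ⟨hS, hA⟩ := hp'
    obtain ⟨hSU, hScard⟩ := Finset.mem_filter.1 hS
    rw [Finset.mem_powerset] at hSU
    obtain ⟨hAsub, hAconn⟩ := Finset.mem_filter.1 hA
    rw [Finset.mem_powerset] at hAsub
    have hFsub : Fpart A ⊆ ctE2 S (U \ S) := Fpart_sub hEH' hAsub
    have hFU : ∀ e ∈ Fpart A, e.1 ∈ U ∧ e.2 ∈ U := fun e he => ctE2_endU hSU (hFsub he)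
    have h1 : Fpart (dA U A) = dFs U (Fpart A) := Fpart_dA
    have h2 : dS U (Fpart (dA U A)) (dS U (Fpart A) S) = S := by
      rw [h1]; exact dS_invol hSU hFU
    have h3 : dA U (dA U A) = A := dA_invol hFU
    simp only [h2, h3]
  · rintro ⟨S, A⟩ hp'
    rw [Finset.mem_sigma] at hp'
    obtain ⟨hS, hA⟩ := hp'
    obtain ⟨hSU, hScard⟩ := Finset.mem_filter.1 hS
    rw [Finset.mem_powerset] at hSU
    obtain ⟨hAsub, hAconn⟩ := Finset.mem_filter.1 hA
    rw [Finset.mem_powerset] at hAsub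
    have hFsub : Fpart A ⊆ ctE2 S (U \ S) := Fpart_sub hEH' hAsub
    have hFU : ∀ e ∈ Fpart A, e.1 ∈ U ∧ e.2 ∈ U := fun e he => ctE2_endU hSU (hFsub he)
    have hc : (dA U A).card = A.card := dA_card hFU
    show (y - 1) ^ (A.card + 1 - VH.card) = (y - 1) ^ ((dA U A).card + 1 - VH.card)
    rw [hc]

end
end

section
/- Let G be a complete tiered graph with two tiers and V(G) = [n+2]. For i = 1, 2 let a_i(G) = |{r ∈ [n+1] : r ∈ V_i(G) and r+1 ∈ V_{3−i}(G)}|. If G is connected, then a_1(G) − a_2(G) = 1. -/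
open Finset

attribute [local instance 10] Classical.propDecidable

noncomputable section

lemma tele_stmt17 (g : ℕ → ℤ) (n : ℕ) :
    ∑ r ∈ Finset.Icc 1 (n+1), (g r - g (r+1)) = g 1 - g (n+2) := by
  induction n with
  | zero => simp
  | succ k ih =>
    rw [show k+1+1 = (k+1)+1 from rfl, Finset.sum_Icc_succ_top (by omega), ih]
    ring_nf

/-- for a connected complete tiered graph `G` with two tiers on `[n+2]`
(tier-1 set `S`), with `a_i(G) = |{r ∈ [n+1] : r ∈ V_i(G), r+1 ∈ V_{3-i}(G)}|`,
we have `a_1(G) − a_2(G) = 1`. -/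
theorem stmt17 (n : ℕ) (S : Finset ℕ) (hS : S ⊆ Finset.Icc 1 (n + 2))
    (hconn : connP (Finset.Icc 1 (n + 2)) (ctE2 S (Finset.Icc 1 (n + 2) \ S))) :
    ((Finset.Icc 1 (n + 1)).filter fun r => r ∈ S ∧ r + 1 ∉ S).card
      = ((Finset.Icc 1 (n + 1)).filter fun r => r ∉ S ∧ r + 1 ∈ S).card + 1 := by
  have hmem : ∀ u v : ℕ, (u, v) ∈ ctE2 S (Finset.Icc 1 (n + 2) \ S) ↔
      u ∈ S ∧ v ∈ Finset.Icc 1 (n+2) ∧ v ∉ S ∧ u < v := by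
    intro u v
    simp [ctE2, Finset.mem_filter, Finset.mem_product, Finset.mem_sdiff]
    tauto
  have h1 : (1 : ℕ) ∈ S := by
    by_contra h1
    have hr := hconn.2 1 (by simp) 2 (Finset.mem_Icc.mpr (by omega))
    rcases hr.cases_head with h | ⟨c, hc, _⟩
    · omega
    · rcases hc with h | h
      · exact h1 ((hmem 1 c).mp h).1
      · have := ((hmem c 1).mp h)
        have := Finset.mem_Icc.mp (hS this.1)
        omega
  have h2 : (n + 2 : ℕ) ∉ S := by
    by_contra h2
    have hr := hconn.2 (n+2) (Finset.mem_Icc.mpr (by omega)) 1 (by simp)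
    rcases hr.cases_head with h | ⟨c, hc, _⟩
    · omega
    · rcases hc with h | h
      · have := (hmem _ c).mp h
        have := Finset.mem_Icc.mp this.2.1
        omega
      · exact ((hmem c _).mp h).2.2.1 h2
  have key : ∀ r ∈ Finset.Icc 1 (n+1),
      ((if r ∈ S ∧ r + 1 ∉ S then (1:ℤ) else 0) - (if r ∉ S ∧ r + 1 ∈ S then 1 else 0))
        = (if r ∈ S then (1:ℤ) else 0) - (if r + 1 ∈ S then 1 else 0) := by
    intro r _
    by_cases h : r ∈ S <;> by_cases h' : r + 1 ∈ S <;> simp [h, h']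
  have main : (((Finset.Icc 1 (n + 1)).filter fun r => r ∈ S ∧ r + 1 ∉ S).card : ℤ)
      - ((Finset.Icc 1 (n + 1)).filter fun r => r ∉ S ∧ r + 1 ∈ S).card = 1 := by
    rw [Finset.card_filter, Finset.card_filter]
    push_cast
    rw [← Finset.sum_sub_distrib, Finset.sum_congr rfl key,
      tele_stmt17 (fun r => if r ∈ S then (1:ℤ) else 0)]
    simp [h1, h2]
  omega


end
end
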